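/- For alphabet size k = 3 and dimension n = 4, there exists a marking of the 3-ary 4-cube in which every vertex has mark-count 0 or 3; in such a marking exactly 36 of the 81 vertices have mark-count 3 and the remaining 45 have mark-count 0. -/

import Mathlib

/-- A marking of the `k`-ary `n`-cube: for each vertex `v : Fin n → Fin k` and
each direction `i`, the "edge through `v` in direction `i`" is the set of `k`
vertices agreeing with `v` in all coordinates except possibly `i`.  A marking
assigns to each such edge one of its `k` vertices: `mark v i` is the vertex
assigned to the edge through `v` in direction `i`; it must lie on that edge
(`mem_edge`) and depend only on the edge itself (`compatible`). -/
structure Marking (k n : ℕ) where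
  mark : (Fin n → Fin k) → Fin n → (Fin n → Fin k)
  mem_edge : ∀ v i j, j ≠ i → mark v i j = v j
  compatible : ∀ v w i, (∀ j, j ≠ i → v j = w j) → mark v i = mark w i

/-- The mark-count of a vertex `v`: the number of directions `i` such that
the edge through `v` in direction `i` has `v` as its assigned vertex. -/
def Marking.count {k n : ℕ} (m : Marking k n) (v : Fin n → Fin k) : ℕ :=
  (Finset.univ.filter fun i : Fin n => m.mark v i = v).card

namespace T43

def t0 : Fin 3 → Fin 3 → Fin 3 → Fin 3 :=
  ![![![2,1,1],![1,0,1],![0,2,0]],![![2,1,0],![0,1,0],![1,0,1]],![![0,2,2],![0,1,0],![0,0,2]]]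
def t1 : Fin 3 → Fin 3 → Fin 3 → Fin 3 :=
  ![![![2,0,1],![1,0,2],![2,2,0]],![![2,0,0],![0,1,0],![1,0,2]],![![0,2,2],![2,1,0],![0,0,1]]]
def t2 : Fin 3 → Fin 3 → Fin 3 → Fin 3 :=
  ![![![2,0,2],![1,2,1],![1,2,1]],![![1,2,0],![2,0,2],![0,1,2]],![![2,2,1],![0,1,2],![1,0,2]]]
def t3 : Fin 3 → Fin 3 → Fin 3 → Fin 3 :=
  ![![![1,1,0],![2,2,1],![0,0,0]],![![1,2,1],![1,1,2],![0,1,2]],![![0,2,0],![0,1,2],![2,0,2]]]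

def f (v : Fin 4 → Fin 3) (i : Fin 4) : Fin 3 :=
  ![t0 (v 1) (v 2) (v 3), t1 (v 0) (v 2) (v 3), t2 (v 0) (v 1) (v 3), t3 (v 0) (v 1) (v 2)] i

lemma f_compat (v w : Fin 4 → Fin 3) (i : Fin 4) (h : ∀ j, j ≠ i → v j = w j) :
    f v i = f w i := by
  fin_cases i
  · show t0 (v 1) (v 2) (v 3) = t0 (w 1) (w 2) (w 3)
    rw [h 1 (by decide), h 2 (by decide), h 3 (by decide)]
  · show t1 (v 0) (v 2) (v 3) = t1 (w 0) (w 2) (w 3)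
    rw [h 0 (by decide), h 2 (by decide), h 3 (by decide)]
  · show t2 (v 0) (v 1) (v 3) = t2 (w 0) (w 1) (w 3)
    rw [h 0 (by decide), h 1 (by decide), h 3 (by decide)]
  · show t3 (v 0) (v 1) (v 2) = t3 (w 0) (w 1) (w 2)
    rw [h 0 (by decide), h 1 (by decide), h 2 (by decide)]

def M : Marking 3 4 where
  mark v i j := if j = i then f v i else v j
  mem_edge v i j h := if_neg h
  compatible v w i h := by
    funext j
    by_cases hj : j = i
    · subst hj
      simp only [if_pos rfl]
      exact f_compat v w j h
    · simp only [if_neg hj, h j hj]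

end T43

lemma fixed_card (m : Marking 3 4) (i : Fin 4) :
    (Finset.univ.filter fun v : Fin 4 → Fin 3 => m.mark v i = v).card = 27 := by
  classical
  set S := (Finset.univ.filter fun v : Fin 4 → Fin 3 => m.mark v i = v) with hS
  have hfix : ∀ v : Fin 4 → Fin 3, m.mark (m.mark v i) i = m.mark v i := by
    intro v
    exact m.compatible (m.mark v i) v i (fun j hj => m.mem_edge v i j hj)
  have key := Finset.card_eq_sum_card_fiberwise
    (f := fun v : Fin 4 → Fin 3 => m.mark v i) (s := Finset.univ) (t := S)
    (by intro v _; simp only [hS, Finset.coe_filter, Set.mem_setOf_eq, Finset.mem_filter, Finset.mem_univ, true_and]; exact hfix v)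
  have hfiber : ∀ u ∈ S, (Finset.univ.filter fun v : Fin 4 → Fin 3 => m.mark v i = u).card = 3 := by
    intro u hu
    simp only [hS, Finset.mem_filter, Finset.mem_univ, true_and] at hu
    have : (Finset.univ.filter fun v : Fin 4 → Fin 3 => m.mark v i = u)
        = (Finset.univ : Finset (Fin 3)).image (fun t => Function.update u i t) := by
      ext v
      simp only [Finset.mem_filter, Finset.mem_univ, true_and, Finset.mem_image]
      constructor
      · intro hv
        refine ⟨v i, ?_⟩
        funext j
        by_cases hj : j = i
        · subst hj; simp
        · rw [Function.update_of_ne hj, ← hv, m.mem_edge v i j hj]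
      · rintro ⟨t, -, rfl⟩
        have := m.compatible (Function.update u i t) u i
          (fun j hj => Function.update_of_ne hj _ _)
        rw [this, hu]
    rw [this, Finset.card_image_of_injective _ ?_, Finset.card_univ, Fintype.card_fin]
    intro a b hab
    have := congrFun hab i
    simpa using this
  rw [Finset.sum_congr rfl hfiber, Finset.sum_const, smul_eq_mul] at key
  have hcard : (Finset.univ : Finset (Fin 4 → Fin 3)).card = 81 := by
    simp [Finset.card_univ]
  omega

lemma total_sum (m : Marking 3 4) :
    ∑ v : Fin 4 → Fin 3, m.count v = 108 := by
  classical
  have : ∀ v : Fin 4 → Fin 3, m.count v = ∑ i : Fin 4, if m.mark v i = v then 1 else 0 := by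
    intro v; rw [Marking.count, Finset.card_filter]
  simp_rw [this]
  rw [Finset.sum_comm]
  have : ∀ i : Fin 4, ∑ v : Fin 4 → Fin 3, (if m.mark v i = v then 1 else 0) = 27 := by
    intro i
    rw [← Finset.card_filter]
    exact fixed_card m i
  simp_rw [this]
  simp

set_option maxHeartbeats 1000000 in
lemma M_count_aux : ∀ a b c d : Fin 3,
    T43.M.count ![a,b,c,d] = 0 ∨ T43.M.count ![a,b,c,d] = 3 := by decide

lemma M_count (v : Fin 4 → Fin 3) : T43.M.count v = 0 ∨ T43.M.count v = 3 := by
  have hv : v = ![v 0, v 1, v 2, v 3] := by funext j; fin_cases j <;> rfl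
  rw [hv]
  exact M_count_aux (v 0) (v 1) (v 2) (v 3)

theorem ternary_4cube_marking_0_3 :
    (∃ m : Marking 3 4, ∀ v, m.count v = 0 ∨ m.count v = 3) ∧
      ∀ m : Marking 3 4, (∀ v, m.count v = 0 ∨ m.count v = 3) →
        ((Finset.univ : Finset (Fin 4 → Fin 3)).filter fun v => m.count v = 3).card = 36 ∧
        ((Finset.univ : Finset (Fin 4 → Fin 3)).filter fun v => m.count v = 0).card = 45 := by
  constructor
  · exact ⟨T43.M, M_count⟩
  · intro m h
    classical
    have hsum := total_sum m
    have hsplit := Finset.sum_filter_add_sum_filter_not Finset.univ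
      (fun v : Fin 4 → Fin 3 => m.count v = 3) (fun v => m.count v)
    have h3 : ∑ v ∈ Finset.univ.filter (fun v : Fin 4 → Fin 3 => m.count v = 3), m.count v
        = 3 * ((Finset.univ : Finset (Fin 4 → Fin 3)).filter fun v => m.count v = 3).card := by
      rw [Finset.sum_congr rfl (fun v hv => (Finset.mem_filter.mp hv).2), Finset.sum_const,
        smul_eq_mul, mul_comm]
    have h0 : ∑ v ∈ Finset.univ.filter (fun v : Fin 4 → Fin 3 => ¬ m.count v = 3), m.count v = 0 := by
      refine Finset.sum_eq_zero fun v hv => ?_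
      have := (Finset.mem_filter.mp hv).2
      rcases h v with h' | h' <;> omega
    have hA : ((Finset.univ : Finset (Fin 4 → Fin 3)).filter fun v => m.count v = 3).card = 36 := by
      omega
    refine ⟨hA, ?_⟩
    have heq : ((Finset.univ : Finset (Fin 4 → Fin 3)).filter fun v => m.count v = 0)
        = ((Finset.univ : Finset (Fin 4 → Fin 3)).filter fun v => ¬ m.count v = 3) := by
      ext v
      simp only [Finset.mem_filter, Finset.mem_univ, true_and]
      rcases h v with h' | h' <;> omega
    have hcc := Finset.card_filter_add_card_filter_not
      (s := (Finset.univ : Finset (Fin 4 → Fin 3))) (p := fun v => m.count v = 3)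
    have hcard : (Finset.univ : Finset (Fin 4 → Fin 3)).card = 81 := by
      simp [Finset.card_univ]
    rw [heq]
    omega
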